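/- arXiv:1906.10114 — 4 statements merged into one kernel-verified Lean document; each statement's English description precedes it below -/
import Mathlib

section
/- Let η ∈ ℝ with 0 ≤ η < 1 and a ∈ [0,1]. Then every root ρ ∈ ℂ of the quadratic equation ρ² − (1+a)ηρ + aη = 0 satisfies |ρ| < 1. In particular, if (1+a)²η² < 4aη then the roots are complex with |ρ| = √(aη) < 1, while if (1+a)²η² ≥ 4aη the roots are real and lie in (−1,1). -/
private lemma realroot_bound (η a x : ℝ) (hη0 : 0 ≤ η) (hη1 : η < 1)
    (ha0 : 0 ≤ a) (ha1 : a ≤ 1) (hx : x ^ 2 - (1 + a) * η * x + a * η = 0) :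
    -1 < x ∧ x < 1 := by
  constructor
  · by_contra hc
    push_neg at hc
    have h1 : (0:ℝ) ≤ (-1 - x) * ((1 + a) * η) := by
      apply mul_nonneg (by linarith) (by positivity)
    nlinarith [mul_nonneg ha0 hη0]
  · by_contra hc
    push_neg at hc
    have hs2 : (1 + a) * η < 2 := by nlinarith
    have h1 : (0:ℝ) ≤ (x - 1) * (x + 1 - (1 + a) * η) := by
      apply mul_nonneg (by linarith) (by linarith)
    nlinarith [mul_nonneg ha0 hη0]

/-- For `0 ≤ η < 1` and `a ∈ [0,1]`, every root `ρ ∈ ℂ` of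
`ρ² − (1+a)ηρ + aη = 0` satisfies `|ρ| < 1`; if `(1+a)²η² < 4aη` the roots are
non-real with `|ρ| = √(aη) < 1`, and if `(1+a)²η² ≥ 4aη` the roots are real in `(−1,1)`. -/
theorem stmt2 (η a : ℝ) (hη0 : 0 ≤ η) (hη1 : η < 1) (ha : a ∈ Set.Icc (0 : ℝ) 1) :
    (∀ ρ : ℂ, ρ ^ 2 - ((1 + a : ℝ) : ℂ) * (η : ℂ) * ρ + (a : ℂ) * (η : ℂ) = 0 →
        ‖ρ‖ < 1) ∧
    ((1 + a) ^ 2 * η ^ 2 < 4 * a * η →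
      ∀ ρ : ℂ, ρ ^ 2 - ((1 + a : ℝ) : ℂ) * (η : ℂ) * ρ + (a : ℂ) * (η : ℂ) = 0 →
        ρ.im ≠ 0 ∧ ‖ρ‖ = Real.sqrt (a * η) ∧ Real.sqrt (a * η) < 1) ∧
    ((1 + a) ^ 2 * η ^ 2 ≥ 4 * a * η →
      ∀ ρ : ℂ, ρ ^ 2 - ((1 + a : ℝ) : ℂ) * (η : ℂ) * ρ + (a : ℂ) * (η : ℂ) = 0 →
        ρ.im = 0 ∧ -1 < ρ.re ∧ ρ.re < 1) := by
  obtain ⟨ha0, ha1⟩ := ha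
  have haη : a * η < 1 := by nlinarith
  have haη0 : 0 ≤ a * η := mul_nonneg ha0 hη0
  have sqrtlt : Real.sqrt (a * η) < 1 := by
    rw [show (1:ℝ) = Real.sqrt 1 by simp]
    exact Real.sqrt_lt_sqrt haη0 (by linarith)
  have key : ∀ ρ : ℂ, ρ ^ 2 - ((1 + a : ℝ) : ℂ) * (η : ℂ) * ρ + (a : ℂ) * (η : ℂ) = 0 →
      (ρ.re ^ 2 - ρ.im ^ 2 - (1 + a) * η * ρ.re + a * η = 0 ∧
        ρ.im * (2 * ρ.re - (1 + a) * η) = 0) := by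
    intro ρ h
    have h1 := congrArg Complex.re h
    have h2 := congrArg Complex.im h
    simp [Complex.add_re, Complex.sub_re, Complex.mul_re, Complex.mul_im, sq,
      Complex.add_im, Complex.sub_im] at h1 h2
    constructor <;> nlinarith [h1, h2]
  have habs : ∀ ρ : ℂ, ρ.im ≠ 0 →
      ρ ^ 2 - ((1 + a : ℝ) : ℂ) * (η : ℂ) * ρ + (a : ℂ) * (η : ℂ) = 0 →
      ‖ρ‖ = Real.sqrt (a * η) := by
    intro ρ hy h
    obtain ⟨h1, h2⟩ := key ρ h
    have hx : 2 * ρ.re - (1 + a) * η = 0 := by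
      rcases mul_eq_zero.mp h2 with h | h
      · exact absurd h hy
      · exact h
    rw [Complex.norm_def, Complex.normSq_apply]
    congr 1
    nlinarith
  have hreal : ∀ ρ : ℂ, ρ.im = 0 →
      ρ ^ 2 - ((1 + a : ℝ) : ℂ) * (η : ℂ) * ρ + (a : ℂ) * (η : ℂ) = 0 →
      -1 < ρ.re ∧ ρ.re < 1 := by
    intro ρ hy h
    obtain ⟨h1, h2⟩ := key ρ h
    rw [hy] at h1
    exact realroot_bound η a ρ.re hη0 hη1 ha0 ha1 (by nlinarith)
  refine ⟨?_, ?_, ?_⟩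
  · intro ρ h
    by_cases hy : ρ.im = 0
    · obtain ⟨hl, hr⟩ := hreal ρ hy h
      have : ‖ρ‖ = |ρ.re| := by
        rw [Complex.norm_def, Complex.normSq_apply, hy]
        simp [Real.sqrt_mul_self_eq_abs]
      rw [this, abs_lt]
      exact ⟨hl, hr⟩
    · rw [habs ρ hy h]
      exact sqrtlt
  · intro hD ρ h
    obtain ⟨h1, h2⟩ := key ρ h
    have hy : ρ.im ≠ 0 := by
      intro hy
      rw [hy] at h1
      nlinarith [sq_nonneg (2 * ρ.re - (1 + a) * η)]
    exact ⟨hy, habs ρ hy h, sqrtlt⟩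
  · intro hD ρ h
    obtain ⟨h1, h2⟩ := key ρ h
    have hy : ρ.im = 0 := by
      rcases mul_eq_zero.mp h2 with h' | h'
      · exact h'
      · nlinarith [sq_nonneg ρ.im]
    exact ⟨hy, hreal ρ hy h⟩
end

section
/- Let A ∈ ℝ^{p×n} have full column rank, let H ∈ ℝ^{n×n} be symmetric positive semi-definite, and define M = A(Id + (AᵀA)^{−1}H)^{−1}(AᵀA)^{−1}Aᵀ. Then M is firmly non-expansive, i.e., for all u, v ∈ ℝ^p, ‖Mu − Mv‖² + ‖(Id − M)u − (Id − M)v‖² ≤ ‖u − v‖². -/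
open Matrix

/-- The Euclidean norm of a finitely-indexed real vector. -/
noncomputable def euclNorm {ι : Type*} [Fintype ι] (x : ι → ℝ) : ℝ :=
  Real.sqrt (∑ i, x i ^ 2)

lemma euclNorm_sq {ι : Type*} [Fintype ι] (x : ι → ℝ) :
    euclNorm x ^ 2 = x ⬝ᵥ x := by
  rw [euclNorm, Real.sq_sqrt (by positivity)]
  simp [dotProduct, sq]

/-- For `A` with full column rank and `H` symmetric positive semi-definite, the matrix
`M = A (Id + (AᵀA)⁻¹H)⁻¹ (AᵀA)⁻¹ Aᵀ` is firmly non-expansive. -/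
theorem stmt6 {p n : ℕ} (A : Matrix (Fin p) (Fin n) ℝ)
    (hA : Function.Injective A.mulVecLin)
    (H : Matrix (Fin n) (Fin n) ℝ) (hH : H.PosSemidef)
    (M : Matrix (Fin p) (Fin p) ℝ)
    (hM : M = A * (1 + (Aᵀ * A)⁻¹ * H)⁻¹ * (Aᵀ * A)⁻¹ * Aᵀ) :
    ∀ u v : Fin p → ℝ,
      euclNorm (M.mulVec u - M.mulVec v) ^ 2 +
        euclNorm ((u - M.mulVec u) - (v - M.mulVec v)) ^ 2 ≤
      euclNorm (u - v) ^ 2 := by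
  have hct : ∀ {a b : ℕ} (B : Matrix (Fin a) (Fin b) ℝ), Bᴴ = Bᵀ :=
    fun B => conjTranspose_eq_transpose_of_trivial B
  -- G = AᵀA is positive definite
  have hGpd : (Aᵀ * A).PosDef := by
    have hpsd := posSemidef_conjTranspose_mul_self (R := ℝ) A
    rw [hct] at hpsd
    refine PosDef.of_dotProduct_mulVec_pos hpsd.1 (fun x hx => ?_)
    have hAx : A.mulVec x ≠ 0 := fun h => hx (hA (by simpa [mulVecLin_apply] using h))
    have : x ⬝ᵥ (Aᵀ * A).mulVec x = (A.mulVec x) ⬝ᵥ (A.mulVec x) := by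
      rw [← mulVec_mulVec, dotProduct_mulVec, vecMul_transpose]
    simpa [star, this] using
      (dotProduct_self_star_pos_iff (v := A.mulVec x)).2 hAx
  have hGHpd : (Aᵀ * A + H).PosDef := hGpd.add_posSemidef hH
  set S : Matrix (Fin n) (Fin n) ℝ := (Aᵀ * A + H)⁻¹ with hS
  have hdet : IsUnit (Aᵀ * A + H).det := hGHpd.det_pos.ne'.isUnit
  have hSinv : (Aᵀ * A + H) * S = 1 := mul_nonsing_inv _ hdet
  have hSinv' : S * (Aᵀ * A + H) = 1 := nonsing_inv_mul _ hdet
  have hSsymm : Sᵀ = S := by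
    rw [hS, transpose_nonsing_inv]
    congr 1
    have := hGHpd.1
    rw [IsHermitian, hct] at this
    exact this
  -- rewrite M
  have hM2 : M = A * S * Aᵀ := by
    rw [hM, hS]
    have h0 : (1 + (Aᵀ * A)⁻¹ * H)⁻¹ * (Aᵀ * A)⁻¹ = ((Aᵀ * A) * (1 + (Aᵀ * A)⁻¹ * H))⁻¹ := by
      rw [Matrix.mul_inv_rev]
    have hdetG : IsUnit (Aᵀ * A).det := hGpd.det_pos.ne'.isUnit
    have h1 : (Aᵀ * A) * (1 + (Aᵀ * A)⁻¹ * H) = Aᵀ * A + H := by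
      rw [mul_add, mul_one, ← Matrix.mul_assoc, mul_nonsing_inv _ hdetG, one_mul]
    rw [Matrix.mul_assoc A, h0, h1]
  -- key: M - M*M is PSD
  have hkey : (M - M * M).PosSemidef := by
    have h1 : M * M = A * S * (Aᵀ * A) * S * Aᵀ := by
      rw [hM2]; simp only [Matrix.mul_assoc]
    have h2 : M = A * S * (Aᵀ * A + H) * S * Aᵀ := by
      rw [Matrix.mul_assoc (A * S), hSinv, Matrix.mul_one, hM2]
    have h3 : M - M * M = (A * S) * H * (A * S)ᴴ := by
      rw [h1, hct, transpose_mul, hSsymm]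
      conv_lhs => rw [h2]
      rw [Matrix.mul_add (A * S)]
      rw [Matrix.add_mul, Matrix.add_mul, add_sub_cancel_left]
      simp only [Matrix.mul_assoc]
    rw [h3]
    exact hH.mul_mul_conjTranspose_same (A * S)
  -- M is symmetric
  have hMsymm : Mᵀ = M := by
    rw [hM2]
    simp [transpose_mul, hSsymm, Matrix.mul_assoc]
  intro u v
  set w := u - v with hw
  have e1 : M.mulVec u - M.mulVec v = M.mulVec w := by rw [hw, mulVec_sub]
  have e2 : (u - M.mulVec u) - (v - M.mulVec v) = w - M.mulVec w := by
    rw [hw, mulVec_sub]; abel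
  rw [e1, e2, euclNorm_sq, euclNorm_sq, euclNorm_sq]
  have hq : (0:ℝ) ≤ w ⬝ᵥ (M - M * M).mulVec w := by
    have := hkey.dotProduct_mulVec_nonneg w
    simpa [star] using this
  have hvm : w ᵥ* M = M *ᵥ w := by
    conv_lhs => rw [← hMsymm]
    rw [vecMul_transpose]
  have hMM : w ⬝ᵥ (M * M).mulVec w = (M.mulVec w) ⬝ᵥ (M.mulVec w) := by
    rw [← mulVec_mulVec, dotProduct_mulVec w M, hvm]
  have hcomm : (M.mulVec w) ⬝ᵥ w = w ⬝ᵥ M.mulVec w := dotProduct_comm _ _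
  rw [sub_mulVec, dotProduct_sub] at hq
  simp only [dotProduct_sub, sub_dotProduct] at *
  nlinarith [hq, hMM, hcomm]
end

section
/- In the setting of the companion recursion above, the extrapolated point z̄_{k,s} = z_k + ∑_{i=1}^s V_k (Cᵏᵢ)_{(:,1)} (first columns of powers C^i) satisfies z̄_{k,s} = z_{k+s} + ∑_{j=1}^s (E_{k,j})_{(:,1)}, and consequently for any z*, ‖z̄_{k,s} − z*‖ ≤ ‖z_{k+s} − z*‖ + ε_k · ∑_{ℓ=1}^s ‖M^ℓ‖ |∑_{i=0}^{s−ℓ} (C^i)_{(1,1)}|, where ε_k = ‖V_{k−1}c − v_k‖. -/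
/-- The operator (spectral) norm of a real matrix, induced by the Euclidean norms. -/
noncomputable def matOpNorm {ι κ : Type*} [Fintype ι] [Fintype κ]
    (A : Matrix ι κ ℝ) : ℝ :=
  sSup {t : ℝ | ∃ x : κ → ℝ, euclNorm x ≤ 1 ∧ t = euclNorm (A.mulVec x)}

lemma euclNorm_eq {ι : Type*} [Fintype ι] (x : EuclideanSpace ℝ ι) :
    euclNorm x = ‖x‖ := by
  rw [EuclideanSpace.norm_eq, euclNorm]
  congr 1; apply Finset.sum_congr rfl; intro i _
  rw [Real.norm_eq_abs, sq_abs]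

noncomputable def matCLM {ι κ : Type*} [Fintype ι] [Fintype κ] [DecidableEq κ]
    (A : Matrix ι κ ℝ) : EuclideanSpace ℝ κ →L[ℝ] EuclideanSpace ℝ ι :=
  LinearMap.toContinuousLinearMap (Matrix.toEuclideanLin A)

lemma matOpNorm_eq {ι κ : Type*} [Fintype ι] [Fintype κ] [DecidableEq κ]
    (A : Matrix ι κ ℝ) : matOpNorm A = ‖matCLM A‖ := by
  rw [← ContinuousLinearMap.sSup_unitClosedBall_eq_norm, matOpNorm]
  congr 1
  ext t
  constructor
  · rintro ⟨x, hx, rfl⟩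
    refine ⟨(WithLp.equiv 2 _).symm x, ?_, ?_⟩
    · rw [Metric.mem_closedBall, dist_zero_right]
      rw [euclNorm_eq] at hx; exact hx
    · exact (euclNorm_eq (matCLM A ((WithLp.equiv 2 _).symm x))).symm
  · rintro ⟨x, hx, rfl⟩
    refine ⟨WithLp.equiv 2 _ x, ?_, ?_⟩
    · rw [Metric.mem_closedBall, dist_zero_right] at hx
      rw [euclNorm_eq]; exact hx
    · exact (euclNorm_eq (matCLM A x)).symm

lemma euclNorm_mulVec_le {ι κ : Type*} [Fintype ι] [Fintype κ] [DecidableEq κ]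
    (A : Matrix ι κ ℝ) (x : κ → ℝ) :
    euclNorm (A.mulVec x) ≤ matOpNorm A * euclNorm x := by
  rw [matOpNorm_eq]
  calc euclNorm (A.mulVec x) = ‖matCLM A ((WithLp.equiv 2 _).symm x)‖ :=
        euclNorm_eq (matCLM A ((WithLp.equiv 2 _).symm x))
    _ ≤ ‖matCLM A‖ * ‖(WithLp.equiv 2 _).symm x‖ := (matCLM A).le_opNorm _
    _ = ‖matCLM A‖ * euclNorm x :=
        congrArg (fun t => ‖matCLM A‖ * t)
          (euclNorm_eq ((WithLp.equiv 2 (κ → ℝ)).symm x)).symm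

lemma euclNorm_add_le {ι : Type*} [Fintype ι] (x y : ι → ℝ) :
    euclNorm (x + y) ≤ euclNorm x + euclNorm y := by
  have := norm_add_le ((WithLp.equiv 2 (ι → ℝ)).symm x) ((WithLp.equiv 2 (ι → ℝ)).symm y)
  rw [← euclNorm_eq, ← euclNorm_eq, ← euclNorm_eq] at this
  exact this

lemma euclNorm_smul {ι : Type*} [Fintype ι] (r : ℝ) (x : ι → ℝ) :
    euclNorm (r • x) = |r| * euclNorm x := by
  have := norm_smul r ((WithLp.equiv 2 (ι → ℝ)).symm x)
  rw [← euclNorm_eq, Real.norm_eq_abs, ← euclNorm_eq] at this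
  exact this

lemma euclNorm_sum_le {ι α : Type*} [Fintype ι] (t : Finset α) (f : α → ι → ℝ) :
    euclNorm (∑ a ∈ t, f a) ≤ ∑ a ∈ t, euclNorm (f a) := by
  have := norm_sum_le (E := EuclideanSpace ℝ ι) t
    (fun a => (WithLp.equiv 2 (ι → ℝ)).symm (f a))
  rw [← euclNorm_eq] at this
  refine le_trans (le_of_eq ?_) (this.trans (le_of_eq (Finset.sum_congr rfl
    fun a _ => (euclNorm_eq _).symm)))
  rw [WithLp.ofLp_sum]; rfl

/-- The extrapolated point `z̄_{k,s} = z_k + ∑_{i=1}^s (V_k C^i)_{(:,1)}` equals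
`z_{k+s} + ∑_{j=1}^s (E_{k,j})_{(:,1)}`, and hence for any `z*`,
`‖z̄_{k,s} − z*‖ ≤ ‖z_{k+s} − z*‖ + ε_k ∑_{ℓ=1}^s ‖M^ℓ‖ |∑_{i=0}^{s−ℓ} (C^i)_{(1,1)}|`,
where `ε_k = ‖V_{k−1} c − v_k‖`. -/
theorem stmt10 {n q : ℕ} (hq : 1 ≤ q)
    (M : Matrix (Fin n) (Fin n) ℝ)
    (z v : ℕ → Fin n → ℝ)
    (hv : ∀ j : ℕ, v (j + 1) = M.mulVec (v j))
    (hzv : ∀ j : ℕ, z (j + 1) - z j = v (j + 1))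
    (c : Fin q → ℝ) (k s : ℕ) (hk : q ≤ k)
    (C : Matrix (Fin q) (Fin q) ℝ)
    (hC : C = Matrix.of fun i j : Fin q =>
        if (j : ℕ) = 0 then c i else if (i : ℕ) + 1 = (j : ℕ) then 1 else 0)
    (V : ℕ → Matrix (Fin n) (Fin q) ℝ)
    (hV : ∀ m : ℕ, V m = Matrix.of fun (i : Fin n) (l : Fin q) => v (m - (l : ℕ)) i)
    (zbar : Fin n → ℝ)
    (hzbar : zbar = z k + ∑ i ∈ Finset.Icc 1 s,
        (fun a : Fin n => (V k * C ^ i) a ⟨0, hq⟩)) :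
    (zbar = z (k + s) + ∑ j ∈ Finset.Icc 1 s,
        (fun a : Fin n => (V k * C ^ j - V (k + j)) a ⟨0, hq⟩)) ∧
    ∀ zs : Fin n → ℝ,
      euclNorm (zbar - zs) ≤ euclNorm (z (k + s) - zs) +
        euclNorm (Matrix.mulVec (V (k - 1)) c - v k) *
          ∑ l ∈ Finset.Icc 1 s, matOpNorm (M ^ l) *
            |∑ i ∈ Finset.range (s - l + 1), (C ^ i) ⟨0, hq⟩ ⟨0, hq⟩| := by
  set o : Fin q := ⟨0, hq⟩ with ho
  set e : Fin n → ℝ := Matrix.mulVec (V (k - 1)) c - v k with he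
  have hmv : ∀ m : ℕ, (V m).mulVec c = ∑ l : Fin q, c l • v (m - (l : ℕ)) := by
    intro m
    funext a
    simp only [Matrix.mulVec, dotProduct, hV, Matrix.of_apply,
      Finset.sum_apply, Pi.smul_apply, smul_eq_mul]
    exact Finset.sum_congr rfl fun l _ => mul_comm _ _
  have hstep : ∀ j : ℕ, q ≤ j → (V j).mulVec c = M.mulVec ((V (j - 1)).mulVec c) := by
    intro j hj
    rw [hmv, hmv, ← Matrix.mulVecLin_apply, map_sum]
    apply Finset.sum_congr rfl
    intro l _
    rw [map_smul]
    congr 1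
    rw [Matrix.mulVecLin_apply,
      show j - (l : ℕ) = (j - 1 - (l : ℕ)) + 1 from by have := l.isLt; omega, hv]
  have hres : ∀ m : ℕ, (V (k + m)).mulVec c - v (k + m + 1) = (M ^ (m + 1)).mulVec e := by
    intro m
    induction m with
    | zero =>
      rw [Nat.add_zero, Nat.zero_add, pow_one, hstep k hk, hv, he, Matrix.mulVec_sub]
    | succ m ih =>
      rw [show k + (m + 1) = k + m + 1 from rfl, hstep (k + m + 1) (by omega),
        show k + m + 1 - 1 = k + m from by omega,
        hv (k + m + 1), ← Matrix.mulVec_sub, ih, Matrix.mulVec_mulVec, ← pow_succ']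
  set colMat : (Fin n → ℝ) → Matrix (Fin n) (Fin q) ℝ :=
    fun d => Matrix.of fun a l => if (l : ℕ) = 0 then d a else 0 with hcolMat
  have hcol1 : ∀ j : ℕ, V j * C = V (j + 1) + colMat ((V j).mulVec c - v (j + 1)) := by
    intro j
    ext a l
    by_cases hl : (l : ℕ) = 0
    · have hrhs : (V (j + 1) + colMat ((V j).mulVec c - v (j + 1))) a l
          = ((V j).mulVec c) a := by
        simp [hcolMat, hl, hV]
      rw [hrhs, Matrix.mul_apply]
      simp [Matrix.mulVec, dotProduct, hC, hl]
    · have hl1 : (l : ℕ) - 1 < q := by omega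
      set l' : Fin q := ⟨(l : ℕ) - 1, hl1⟩ with hl'
      have hrhs : (V (j + 1) + colMat ((V j).mulVec c - v (j + 1))) a l
          = v (j + 1 - (l : ℕ)) a := by
        simp [hcolMat, hl, hV]
      rw [hrhs, Matrix.mul_apply, Finset.sum_eq_single l']
      · rw [hC]
        simp only [Matrix.of_apply]
        rw [if_neg hl, if_pos (show (l' : ℕ) + 1 = (l : ℕ) from by simp only [hl']; omega),
          mul_one, hV]
        simp only [Matrix.of_apply]
        rw [show j - ((l : ℕ) - 1) = j + 1 - (l : ℕ) from by omega]
      · intro p _ hp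
        rw [hC]
        simp only [Matrix.of_apply]
        rw [if_neg hl, if_neg (show ¬((p : ℕ) + 1 = (l : ℕ)) from fun h =>
          hp (by apply Fin.ext; simp only [hl']; omega)), mul_zero]
      · intro h; exact absurd (Finset.mem_univ l') h
  have hcolmul : ∀ (d : Fin n → ℝ) (B : Matrix (Fin q) (Fin q) ℝ) (a : Fin n) (l : Fin q),
      (colMat d * B) a l = d a * B o l := by
    intro d B a l
    rw [Matrix.mul_apply, Finset.sum_eq_single o]
    · simp [hcolMat, ho]
    · intro p _ hp
      have : (p : ℕ) ≠ 0 := by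
        intro h; exact hp (Fin.ext (by simp [h, ho]))
      simp [hcolMat, this]
    · intro h; exact absurd (Finset.mem_univ o) h
  have hmain : ∀ j : ℕ, V k * C ^ j
      = V (k + j) + ∑ m ∈ Finset.Icc 1 j, colMat ((M ^ m).mulVec e) * C ^ (j - m) := by
    intro j
    induction j with
    | zero => simp
    | succ j ih =>
      rw [show V k * C ^ (j + 1) = (V k * C ^ j) * C from by rw [pow_succ, Matrix.mul_assoc],
        ih, Matrix.add_mul, hcol1 (k + j), show k + j + 1 = k + (j + 1) from rfl,
        Matrix.sum_mul]
      have hrw : ∀ m ∈ Finset.Icc 1 j,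
          colMat ((M ^ m).mulVec e) * C ^ (j - m) * C
            = colMat ((M ^ m).mulVec e) * C ^ (j + 1 - m) := by
        intro m hm
        simp only [Finset.mem_Icc] at hm
        rw [Matrix.mul_assoc, ← pow_succ, show j - m + 1 = j + 1 - m from by omega]
      rw [Finset.sum_congr rfl hrw, Finset.sum_Icc_succ_top (by omega : 1 ≤ j + 1)]
      rw [show (V (k + j)).mulVec c - v (k + (j + 1)) = (M ^ (j + 1)).mulVec e from hres j,
        show j + 1 - (j + 1) = 0 from by omega, pow_zero, Matrix.mul_one]
      abel
  have hz : ∀ t : ℕ, z (k + t) = z k + ∑ j ∈ Finset.Icc 1 t, v (k + j) := by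
    intro t
    induction t with
    | zero => simp
    | succ t ih =>
      have h1 : z (k + t + 1) = v (k + t + 1) + z (k + t) :=
        sub_eq_iff_eq_add.mp (hzv (k + t))
      rw [show k + (t + 1) = k + t + 1 from rfl, h1, ih,
        Finset.sum_Icc_succ_top (by omega : 1 ≤ t + 1), Nat.add_assoc]
      abel
  have hVcol : ∀ j : ℕ, (fun a : Fin n => V (k + j) a o) = v (k + j) := by
    intro j
    funext a
    rw [hV]
    simp [ho]
  have part1 : zbar = z (k + s) + ∑ j ∈ Finset.Icc 1 s,
      (fun a : Fin n => (V k * C ^ j - V (k + j)) a o) := by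
    rw [hzbar, hz s]
    have h1 : ∀ j ∈ Finset.Icc 1 s, (fun a : Fin n => (V k * C ^ j - V (k + j)) a o)
        = (fun a : Fin n => (V k * C ^ j) a o) - v (k + j) := by
      intro j _
      funext a
      simp only [Matrix.sub_apply, Pi.sub_apply, ← hVcol j]
    rw [Finset.sum_congr rfl h1, Finset.sum_sub_distrib]
    abel
  refine ⟨part1, ?_⟩
  intro zs
  have hswap : (∑ j ∈ Finset.Icc 1 s, ∑ m ∈ Finset.Icc 1 j,
        ((C ^ (j - m)) o o) • (M ^ m).mulVec e)
      = ∑ m ∈ Finset.Icc 1 s, ∑ j ∈ Finset.Icc m s,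
        ((C ^ (j - m)) o o) • (M ^ m).mulVec e := by
    rw [Finset.sum_sigma', Finset.sum_sigma']
    apply Finset.sum_nbij' (fun p => ⟨p.2, p.1⟩) (fun p => ⟨p.2, p.1⟩) <;>
      simp +contextual [Finset.mem_sigma] <;> omega
  have hD : (∑ j ∈ Finset.Icc 1 s, (fun a : Fin n => (V k * C ^ j - V (k + j)) a o))
      = ∑ m ∈ Finset.Icc 1 s,
          (∑ i ∈ Finset.range (s - m + 1), (C ^ i) o o) • (M ^ m).mulVec e := by
    have h1 : ∀ j ∈ Finset.Icc 1 s, (fun a : Fin n => (V k * C ^ j - V (k + j)) a o)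
        = ∑ m ∈ Finset.Icc 1 j, ((C ^ (j - m)) o o) • (M ^ m).mulVec e := by
      intro j _
      funext a
      simp only [Matrix.sub_apply, hmain j, Matrix.add_apply, Finset.sum_apply,
        Pi.smul_apply, smul_eq_mul, Matrix.sum_apply]
      rw [add_sub_cancel_left]
      exact Finset.sum_congr rfl fun m _ => by rw [hcolmul]; ring
    rw [Finset.sum_congr rfl h1, hswap]
    apply Finset.sum_congr rfl
    intro m hm
    rw [← Finset.sum_smul]
    congr 1
    rw [← Finset.Ico_add_one_right_eq_Icc, Finset.sum_Ico_eq_sum_range]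
    simp only [Finset.mem_Icc] at hm
    apply Finset.sum_congr (by congr 1; omega)
    intro i _
    have hmi : m + i - m = i := by omega
    rw [hmi]
  have hsplit : zbar - zs = (z (k + s) - zs)
      + ∑ j ∈ Finset.Icc 1 s, (fun a : Fin n => (V k * C ^ j - V (k + j)) a o) := by
    rw [part1]; abel
  rw [hsplit]
  refine le_trans (euclNorm_add_le _ _) (add_le_add_right ?_ _)
  rw [hD]
  refine le_trans (euclNorm_sum_le _ _) ?_
  rw [Finset.mul_sum]
  apply Finset.sum_le_sum
  intro m hm
  rw [euclNorm_smul]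
  calc |∑ i ∈ Finset.range (s - m + 1), (C ^ i) o o| * euclNorm ((M ^ m).mulVec e)
      ≤ |∑ i ∈ Finset.range (s - m + 1), (C ^ i) o o| * (matOpNorm (M ^ m) * euclNorm e) :=
        mul_le_mul_of_nonneg_left (euclNorm_mulVec_le _ _) (abs_nonneg _)
    _ = euclNorm e * (matOpNorm (M ^ m) * |∑ i ∈ Finset.range (s - m + 1), (C ^ i) o o|) := by
        ring
end

section
/- Let T ∈ ℝ^{n×n} be a normal matrix that is an orthogonal conjugate of the block-diagonal matrix diag(B₁, …, B_r, 0_{n−2r}) where B_i = cos(ζ_i)[[cos ζ_i, sin ζ_i],[−sin ζ_i, cos ζ_i]] and 0 < ζ₁ = … = ζ_e < ζ_{e+1} ≤ … ≤ ζ_r < π/2. Let v₀ ∈ ℝ^n be such that its component in the kernel block is zero, with nonzero component in the first 2e coordinates (after conjugation), and define v_k = T^k v₀ and θ_k = arccos(⟨v_k, v_{k−1}⟩/(‖v_k‖‖v_{k−1}‖)). Then cos(θ_k) = cos(ζ₁) + O(η^{2k}) with η = cos(ζ_{e+1})/cos(ζ₁); in particular cos(θ_k) → cos(ζ₁). -/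
open Matrix

namespace Stmt15Aux

lemma rot_dot (c s : ℝ) (h : c^2 + s^2 = 1) (x y : Fin 2 → ℝ) :
    (c • !![c, s; -s, c]).mulVec x ⬝ᵥ (c • !![c, s; -s, c]).mulVec y = c^2 * (x ⬝ᵥ y) := by
  simp [Matrix.mulVec, dotProduct, Fin.sum_univ_two]
  linear_combination (c^2 * (x 0 * y 0 + x 1 * y 1)) * h

lemma rot_dot_self (c s : ℝ) (y : Fin 2 → ℝ) :
    (c • !![c, s; -s, c]).mulVec y ⬝ᵥ y = c^2 * (y ⬝ᵥ y) := by
  simp [Matrix.mulVec, dotProduct, Fin.sum_univ_two]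
  ring

lemma rot_pow_dot (c s : ℝ) (h : c^2 + s^2 = 1) (k : ℕ) (x y : Fin 2 → ℝ) :
    ((c • !![c, s; -s, c])^k).mulVec x ⬝ᵥ ((c • !![c, s; -s, c])^k).mulVec y
      = c^(2*k) * (x ⬝ᵥ y) := by
  induction k generalizing x y with
  | zero => simp
  | succ n ih =>
    rw [pow_succ, ← Matrix.mulVec_mulVec, ← Matrix.mulVec_mulVec, ih, rot_dot c s h,
      show 2*(n+1) = 2*n + 2 by ring, pow_add]
    ring

lemma rot_pow_succ_dot (c s : ℝ) (h : c^2 + s^2 = 1) (k : ℕ) (y : Fin 2 → ℝ) :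
    ((c • !![c, s; -s, c])^(k+1)).mulVec y ⬝ᵥ ((c • !![c, s; -s, c])^k).mulVec y
      = c^(2*(k+1)) * (y ⬝ᵥ y) := by
  rw [pow_succ, ← Matrix.mulVec_mulVec, rot_pow_dot c s h, rot_dot_self,
    show 2*(k+1) = 2*k + 2 by ring, pow_add]
  ring

lemma blockDiagonal_mulVec' {o ι : Type*} [Fintype o] [Fintype ι] [DecidableEq o] [DecidableEq ι]
    (g : ι → Matrix o o ℝ) (x : o × ι → ℝ) (p : o) (i : ι) :
    (Matrix.blockDiagonal g).mulVec x (p, i) = (g i).mulVec (fun q => x (q, i)) p := by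
  simp [Matrix.mulVec, dotProduct, Matrix.blockDiagonal_apply, Fintype.sum_prod_type,
    ite_mul, Finset.sum_ite_eq, Finset.sum_ite_eq']

lemma Dpow_mulVec {r m : ℕ} (f : Fin r → Matrix (Fin 2) (Fin 2) ℝ)
    (w : (Fin 2 × Fin r) ⊕ Fin m → ℝ) (hw : ∀ j, w (Sum.inr j) = 0) (k : ℕ) :
    ((Matrix.fromBlocks (Matrix.blockDiagonal f) 0 0 (0 : Matrix (Fin m) (Fin m) ℝ))^k).mulVec w
      = Sum.elim (fun pi : Fin 2 × Fin r =>
          ((f pi.2)^k).mulVec (fun q => w (Sum.inl (q, pi.2))) pi.1) 0 := by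
  induction k with
  | zero =>
    funext z
    cases z with
    | inl pi => simp
    | inr j => simp [hw]
  | succ n ih =>
    rw [pow_succ', ← Matrix.mulVec_mulVec, ih, Matrix.fromBlocks_mulVec]
    funext z
    cases z with
    | inr j => simp
    | inl pi =>
      obtain ⟨p, i⟩ := pi
      simp only [Sum.elim_inl, Matrix.zero_mulVec, add_zero, Pi.add_apply, Pi.zero_apply]
      rw [blockDiagonal_mulVec']
      simp only [Function.comp, Sum.elim_inl]
      rw [show (fun q => (f i ^ n *ᵥ fun q' => w (Sum.inl (q', i))) q)
            = (f i ^ n *ᵥ fun q' => w (Sum.inl (q', i))) from rfl,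
        Matrix.mulVec_mulVec, ← pow_succ']

lemma dot_sum_blocks {r m : ℕ} (a b : Fin 2 × Fin r → ℝ) :
    (Sum.elim a (0 : Fin m → ℝ)) ⬝ᵥ (Sum.elim b 0)
      = ∑ i : Fin r, (fun q => a (q,i)) ⬝ᵥ (fun q => b (q,i)) := by
  simp only [dotProduct, Fintype.sum_sum_type, Sum.elim_inl, Sum.elim_inr,
    Pi.zero_apply, mul_zero, Finset.sum_const_zero, add_zero, Fintype.sum_prod_type]
  rw [Finset.sum_comm]

lemma frac_eq_sqrt_div (X Y : ℝ) (hX : 0 < X) (hY : 0 < Y) :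
    X / (Real.sqrt X * Real.sqrt Y) = Real.sqrt (X / Y) := by
  rw [Real.sqrt_div hX.le]
  rw [div_eq_div_iff (by positivity) (Real.sqrt_pos.mpr hY).ne']
  linear_combination (-(Real.sqrt Y)) * (Real.mul_self_sqrt hX.le)

lemma abs_E_bound (E1 E0 Bc ce2j ce2 c12 : ℝ) (h2 : E1 ≤ ce2j * ce2 * Bc)
    (h3 : E0 ≤ ce2j * Bc) (h4 : 0 ≤ E1) (h5 : 0 ≤ E0) (hce2 : ce2 ≤ c12)
    (hcp : 0 < ce2j) (hc12 : 0 ≤ c12) (hBc : 0 ≤ Bc) :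
    |E1 - c12 * E0| ≤ 2 * Bc * c12 * ce2j := by
  rw [abs_le]
  constructor <;> nlinarith

lemma sqrt_close (Q c1 B : ℝ) (hQ : 0 ≤ Q) (hc1 : 0 < c1) (h : |Q - c1^2| ≤ B) :
    |Real.sqrt Q - c1| ≤ B / c1 := by
  have hs : Real.sqrt Q * Real.sqrt Q = Q := Real.mul_self_sqrt hQ
  have hsn : 0 ≤ Real.sqrt Q := Real.sqrt_nonneg Q
  have h1 : Q - c1^2 = (Real.sqrt Q - c1) * (Real.sqrt Q + c1) := by linear_combination -hs
  have h2 : |Real.sqrt Q - c1| * c1 ≤ |Q - c1^2| := by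
    rw [h1, abs_mul, abs_of_pos (by positivity : 0 < Real.sqrt Q + c1)]
    apply mul_le_mul_of_nonneg_left _ (abs_nonneg _)
    nlinarith
  exact (le_div_iff₀ hc1).mpr (h2.trans h)

end Stmt15Aux

open Stmt15Aux

/-- For a normal matrix `T` which is an orthogonal conjugate of the block-diagonal matrix
`diag(B₁, …, B_r, 0)` with `B_i = cos ζᵢ [[cos ζᵢ, sin ζᵢ],[−sin ζᵢ, cos ζᵢ]]`,
`0 < ζ₁ = … = ζ_e < ζ_{e+1} ≤ … ≤ ζ_r < π/2`, and a starting vector `v₀` with zero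
component in the kernel block and nonzero component in the first `2e` coordinates, the
angles `θ_k` between `v_k = T^k v₀` and `v_{k−1}` satisfy
`cos θ_k = cos ζ₁ + O(η^{2k})` with `η = cos ζ_{e+1}/cos ζ₁`; in particular
`cos θ_k → cos ζ₁`. -/

theorem stmt15 {r m e : ℕ} (he : 1 ≤ e) (her : e < r)
    (ζ : Fin r → ℝ)
    (hpos : ∀ i, 0 < ζ i) (hhalf : ∀ i, ζ i < Real.pi / 2)
    (hmono : ∀ i j : Fin r, i ≤ j → ζ i ≤ ζ j)
    (hconst : ∀ i : Fin r, (i : ℕ) < e → ζ i = ζ ⟨0, by omega⟩)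
    (hgap : ζ ⟨0, by omega⟩ < ζ ⟨e, her⟩)
    (U T : Matrix ((Fin 2 × Fin r) ⊕ Fin m) ((Fin 2 × Fin r) ⊕ Fin m) ℝ)
    (hUo : Uᵀ * U = 1) (hUo' : U * Uᵀ = 1)
    (hT : T = Uᵀ *
      (Matrix.fromBlocks
        (Matrix.blockDiagonal (fun i : Fin r => Real.cos (ζ i) •
          !![Real.cos (ζ i), Real.sin (ζ i); -Real.sin (ζ i), Real.cos (ζ i)]))
        0 0 (0 : Matrix (Fin m) (Fin m) ℝ)) * U)
    (v0 : (Fin 2 × Fin r) ⊕ Fin m → ℝ)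
    (hker : ∀ j : Fin m, U.mulVec v0 (Sum.inr j) = 0)
    (hnz : ∃ p : Fin 2 × Fin r, (p.2 : ℕ) < e ∧ U.mulVec v0 (Sum.inl p) ≠ 0) :
    (∃ K : ℝ, ∀ k : ℕ, 1 ≤ k →
      |((T ^ k).mulVec v0 ⬝ᵥ (T ^ (k - 1)).mulVec v0) /
          (euclNorm ((T ^ k).mulVec v0) * euclNorm ((T ^ (k - 1)).mulVec v0)) -
        Real.cos (ζ ⟨0, by omega⟩)| ≤
        K * (Real.cos (ζ ⟨e, her⟩) / Real.cos (ζ ⟨0, by omega⟩)) ^ (2 * k)) ∧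
    Filter.Tendsto (fun k : ℕ =>
        ((T ^ k).mulVec v0 ⬝ᵥ (T ^ (k - 1)).mulVec v0) /
          (euclNorm ((T ^ k).mulVec v0) * euclNorm ((T ^ (k - 1)).mulVec v0)))
      Filter.atTop (nhds (Real.cos (ζ ⟨0, by omega⟩))) := by
  -- notation
  set f : Fin r → Matrix (Fin 2) (Fin 2) ℝ := fun i : Fin r => Real.cos (ζ i) •
    !![Real.cos (ζ i), Real.sin (ζ i); -Real.sin (ζ i), Real.cos (ζ i)] with hf
  set D : Matrix ((Fin 2 × Fin r) ⊕ Fin m) ((Fin 2 × Fin r) ⊕ Fin m) ℝ :=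
    Matrix.fromBlocks (Matrix.blockDiagonal f) 0 0 (0 : Matrix (Fin m) (Fin m) ℝ) with hD
  set w : (Fin 2 × Fin r) ⊕ Fin m → ℝ := U.mulVec v0 with hwdef
  set c : Fin r → ℝ := fun i => Real.cos (ζ i) with hcdef
  set c1 : ℝ := Real.cos (ζ ⟨0, by omega⟩) with hc1def
  set ce : ℝ := Real.cos (ζ ⟨e, her⟩) with hcedef
  set wi : Fin r → Fin 2 → ℝ := fun i q => w (Sum.inl (q, i)) with hwidef
  set a : Fin r → ℝ := fun i => wi i ⬝ᵥ wi i with hadef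
  set S : ℕ → ℝ := fun k => ∑ i, (c i)^(2*k) * a i with hSdef
  -- basic positivity
  have pi_pos := Real.pi_pos
  have hcpos : ∀ i, 0 < c i := fun i =>
    Real.cos_pos_of_mem_Ioo ⟨by linarith [hpos i, Real.pi_pos], hhalf i⟩
  have hc1pos : 0 < c1 := hcpos _
  have hcepos : 0 < ce := hcpos _
  have hcec1 : ce < c1 := by
    apply Real.cos_lt_cos_of_nonneg_of_le_pi (le_of_lt (hpos _)) _ hgap
    linarith [hhalf (⟨e, her⟩ : Fin r), Real.pi_pos]
  have hcieq : ∀ i : Fin r, (i : ℕ) < e → c i = c1 := by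
    intro i hi
    simp only [hcdef]
    rw [hconst i hi]
  have hcile : ∀ i : Fin r, ¬ ((i : ℕ) < e) → c i ≤ ce := by
    intro i hi
    apply Real.cos_le_cos_of_nonneg_of_le_pi (le_of_lt (hpos _)) _ _
    · linarith [hhalf i, Real.pi_pos]
    · exact hmono ⟨e, her⟩ i (by simp [Fin.le_def]; omega)
  -- matrix algebra
  have hTk : ∀ k : ℕ, T ^ k = Uᵀ * D ^ k * U := by
    intro k
    induction k with
    | zero => simpa using hUo.symm
    | succ n ih =>
      rw [pow_succ, ih, hT, pow_succ]
      simp only [Matrix.mul_assoc]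
      rw [← Matrix.mul_assoc U Uᵀ (D * U), hUo', Matrix.one_mul]
  have hdotU : ∀ x y : (Fin 2 × Fin r) ⊕ Fin m → ℝ,
      Uᵀ.mulVec x ⬝ᵥ Uᵀ.mulVec y = x ⬝ᵥ y := by
    intro x y
    rw [Matrix.dotProduct_mulVec, Matrix.vecMul_transpose, Matrix.mulVec_mulVec, hUo',
      Matrix.one_mulVec]
  have hvk : ∀ k : ℕ, (T ^ k).mulVec v0 = Uᵀ.mulVec ((D ^ k).mulVec w) := by
    intro k
    rw [hTk k, ← Matrix.mulVec_mulVec, ← Matrix.mulVec_mulVec, hwdef]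
  have hdd : ∀ k j : ℕ, (T ^ k).mulVec v0 ⬝ᵥ (T ^ j).mulVec v0
      = (D ^ k).mulVec w ⬝ᵥ (D ^ j).mulVec w := by
    intro k j
    rw [hvk, hvk, hdotU]
  have hDk : ∀ k : ℕ, (D ^ k).mulVec w = Sum.elim (fun pi : Fin 2 × Fin r =>
      ((f pi.2)^k).mulVec (fun q => w (Sum.inl (q, pi.2))) pi.1) 0 :=
    Dpow_mulVec f w hker
  have hblock : ∀ k j : ℕ, (D ^ k).mulVec w ⬝ᵥ (D ^ j).mulVec w
      = ∑ i : Fin r, ((f i)^k).mulVec (wi i) ⬝ᵥ ((f i)^j).mulVec (wi i) := by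
    intro k j
    rw [hDk, hDk, dot_sum_blocks]
  have hpyth : ∀ i : Fin r, (c i)^2 + (Real.sin (ζ i))^2 = 1 := fun i =>
    Real.cos_sq_add_sin_sq (ζ i)
  have hSelf : ∀ k : ℕ, (D ^ k).mulVec w ⬝ᵥ (D ^ k).mulVec w = S k := by
    intro k
    rw [hblock]
    refine Finset.sum_congr rfl fun i _ => ?_
    rw [hf]
    exact rot_pow_dot (c i) (Real.sin (ζ i)) (hpyth i) k (wi i) (wi i)
  have hSucc : ∀ k : ℕ, (D ^ (k+1)).mulVec w ⬝ᵥ (D ^ k).mulVec w = S (k+1) := by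
    intro k
    rw [hblock]
    refine Finset.sum_congr rfl fun i _ => ?_
    rw [hf]
    exact rot_pow_succ_dot (c i) (Real.sin (ζ i)) (hpyth i) k (wi i)
  have hnorm : ∀ k : ℕ, euclNorm ((T ^ k).mulVec v0) = Real.sqrt (S k) := by
    intro k
    rw [euclNorm]
    congr 1
    have : (∑ z, ((T ^ k).mulVec v0) z ^ 2) = (T ^ k).mulVec v0 ⬝ᵥ (T ^ k).mulVec v0 := by
      simp [dotProduct, sq]
    rw [this, hdd k k, hSelf k]
  -- scalar decomposition of S
  set P : Finset (Fin r) := Finset.univ.filter (fun i : Fin r => (i : ℕ) < e) with hPdef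
  set A : ℝ := ∑ i ∈ P, a i with hAdef
  set Bc : ℝ := ∑ i ∈ Finset.univ.filter (fun i : Fin r => ¬ ((i : ℕ) < e)), a i with hBdef
  set E : ℕ → ℝ := fun k =>
    ∑ i ∈ Finset.univ.filter (fun i : Fin r => ¬ ((i : ℕ) < e)), (c i)^(2*k) * a i with hEdef
  have ha_nonneg : ∀ i, 0 ≤ a i := by
    intro i
    exact Finset.sum_nonneg fun q _ => mul_self_nonneg _
  have hBc_nonneg : 0 ≤ Bc := Finset.sum_nonneg fun i _ => ha_nonneg i
  have hSsplit : ∀ k : ℕ, S k = c1^(2*k) * A + E k := by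
    intro k
    have h1 : S k = (∑ i ∈ P, c i ^ (2*k) * a i) + E k :=
      (Finset.sum_filter_add_sum_filter_not Finset.univ (fun i : Fin r => (i : ℕ) < e) _).symm
    rw [h1, hAdef, Finset.mul_sum]
    congr 1
    refine Finset.sum_congr rfl fun i hi => ?_
    rw [hcieq i (by simpa [hPdef] using hi)]
  have hE_nonneg : ∀ k, 0 ≤ E k := by
    intro k
    exact Finset.sum_nonneg fun i _ => mul_nonneg (pow_nonneg (hcpos i).le _) (ha_nonneg i)
  have hE_le : ∀ k, E k ≤ ce^(2*k) * Bc := by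
    intro k
    rw [hBdef, Finset.mul_sum]
    refine Finset.sum_le_sum fun i hi => ?_
    have hi' : ¬ ((i : ℕ) < e) := by simpa using hi
    exact mul_le_mul_of_nonneg_right
      (pow_le_pow_left₀ (hcpos i).le (hcile i hi') _) (ha_nonneg i)
  have hA_pos : 0 < A := by
    obtain ⟨p, hpe, hpnz⟩ := hnz
    have h1 : 0 < a p.2 := by
      have : 0 < wi p.2 p.1 * wi p.2 p.1 := by
        apply mul_self_pos.mpr
        simpa [hwidef, hwdef, Prod.mk.eta] using hpnz
      calc (0:ℝ) < wi p.2 p.1 * wi p.2 p.1 := this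
        _ ≤ a p.2 := Finset.single_le_sum (fun q _ => mul_self_nonneg (wi p.2 q))
            (Finset.mem_univ p.1)
    calc (0:ℝ) < a p.2 := h1
      _ ≤ A := Finset.single_le_sum (fun i _ => ha_nonneg i)
          (by simp [hPdef, hpe])
  have hS_pos : ∀ k, 0 < S k := by
    intro k
    rw [hSsplit k]
    have h1 : 0 < c1^(2*k) * A := mul_pos (pow_pos hc1pos _) hA_pos
    linarith [hE_nonneg k]
  -- the key quantity
  set K2 : ℝ := 2 * Bc * c1^4 / (A * ce^2) with hK2def
  set K : ℝ := K2 / c1 with hKdef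
  have hmain : ∀ j : ℕ,
      ((T ^ (j+1)).mulVec v0 ⬝ᵥ (T ^ j).mulVec v0) /
        (euclNorm ((T ^ (j+1)).mulVec v0) * euclNorm ((T ^ j).mulVec v0))
      = Real.sqrt (S (j+1) / S j) := by
    intro j
    rw [hdd (j+1) j, hSucc j, hnorm, hnorm]
    exact frac_eq_sqrt_div _ _ (hS_pos (j+1)) (hS_pos j)
  have hQbound : ∀ j : ℕ, |S (j+1) / S j - c1^2| ≤ K2 * (ce / c1)^(2*(j+1)) := by
    intro j
    have hnum : |S (j+1) - c1^2 * S j| ≤ 2 * Bc * c1^2 * ce^(2*j) := by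
      have h1 : S (j+1) - c1^2 * S j = E (j+1) - c1^2 * E j := by
        rw [hSsplit (j+1), hSsplit j, show 2*(j+1) = 2*j + 2 by ring, pow_add]
        ring
      rw [h1]
      have h2 : E (j+1) ≤ ce^(2*j) * ce^2 * Bc := by
        have := hE_le (j+1)
        rwa [show 2*(j+1) = 2*j + 2 by ring, pow_add] at this
      exact abs_E_bound _ _ _ _ _ _ h2 (hE_le j) (hE_nonneg (j+1)) (hE_nonneg j)
        (pow_le_pow_left₀ hcepos.le hcec1.le 2) (pow_pos hcepos _)
        (sq_nonneg c1) hBc_nonneg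
    have hden : c1^(2*j) * A ≤ S j := by
      rw [hSsplit j]
      linarith [hE_nonneg j]
    have hdenpos : 0 < c1^(2*j) * A := mul_pos (pow_pos hc1pos _) hA_pos
    have heq : S (j+1) / S j - c1^2 = (S (j+1) - c1^2 * S j) / S j := by
      rw [eq_div_iff (hS_pos j).ne', sub_mul, div_mul_cancel₀ _ (hS_pos j).ne']
    have hbn : (0:ℝ) ≤ 2 * Bc * c1^2 * ce^(2*j) :=
      mul_nonneg (mul_nonneg (mul_nonneg (by norm_num) hBc_nonneg) (sq_nonneg c1))
        (pow_pos hcepos _).le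
    rw [heq, abs_div, abs_of_pos (hS_pos j)]
    calc |S (j+1) - c1^2 * S j| / S j
        ≤ (2 * Bc * c1^2 * ce^(2*j)) / (c1^(2*j) * A) := div_le_div₀ hbn hnum hdenpos hden
      _ = K2 * (ce / c1)^(2*(j+1)) := by
          rw [hK2def, div_pow, show 2*(j+1) = 2*j + 2 by ring, pow_add, pow_add]
          field_simp
  have hbound : ∀ j : ℕ, |Real.sqrt (S (j+1) / S j) - c1| ≤ K * (ce / c1)^(2*(j+1)) := by
    intro j
    have h3 := sqrt_close (S (j+1) / S j) c1 (K2 * (ce / c1)^(2*(j+1)))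
      (div_nonneg (hS_pos (j+1)).le (hS_pos j).le) hc1pos (hQbound j)
    calc |Real.sqrt (S (j+1) / S j) - c1| ≤ (K2 * (ce / c1)^(2*(j+1))) / c1 := h3
      _ = K * (ce / c1)^(2*(j+1)) := by rw [hKdef]; ring
  constructor
  · refine ⟨K, fun k hk => ?_⟩
    obtain ⟨j, rfl⟩ : ∃ j, k = j + 1 := ⟨k - 1, (Nat.succ_pred_eq_of_pos hk).symm⟩
    simp only [Nat.add_sub_cancel]
    rw [hmain j]
    exact hbound j
  · rw [tendsto_iff_dist_tendsto_zero]
    have hη0 : 0 ≤ ce / c1 := by positivity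
    have hη1 : ce / c1 < 1 := (div_lt_one hc1pos).mpr hcec1
    have hg : Filter.Tendsto (fun k : ℕ => K * (ce / c1)^(2*k)) Filter.atTop (nhds 0) := by
      have h0 : Filter.Tendsto (fun k : ℕ => ((ce/c1)^2)^k) Filter.atTop (nhds 0) :=
        tendsto_pow_atTop_nhds_zero_of_lt_one (by positivity) (pow_lt_one₀ hη0 hη1 two_ne_zero)
      have h1 := h0.const_mul K
      rw [mul_zero] at h1
      exact h1.congr fun k => by rw [pow_mul]
    apply squeeze_zero' (Filter.Eventually.of_forall fun k => dist_nonneg) _ hg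
    filter_upwards [Filter.eventually_ge_atTop 1] with k hk
    obtain ⟨j, rfl⟩ : ∃ j, k = j + 1 := ⟨k - 1, (Nat.succ_pred_eq_of_pos hk).symm⟩
    simp only [Nat.add_sub_cancel, Real.dist_eq]
    rw [hmain j]
    exact hbound j
end
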